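/- Let G be a normal subgroup of a group Ĝ, let q : Ĝ → Ĝ/G be the quotient map, and suppose there is a group homomorphism s : Ĝ/G → Ĝ with q ∘ s = id. Let φ be a Ĝ-invariant homogeneous quasimorphism on G with defect D(φ). Define φ′ : Ĝ → ℝ by φ′(ĝ) = φ(s(q(ĝ))⁻¹ · ĝ). Then φ′ is a quasimorphism on Ĝ with defect at most D(φ), and φ′ restricted to G equals φ. -/
import Mathlib


/-- Given a section homomorphism of the quotient map, a `Ĝ`-invariant homogeneous
quasimorphism `φ` on `G` extends to a quasimorphism `φ′` on `Ĝ` with `D(φ′) ≤ D(φ)`,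
where `φ′(ĝ) = φ(s(q(ĝ))⁻¹ ĝ)`. -/
theorem extension_quasimorphism_of_section
    {Ghat : Type*} [Group Ghat] (G : Subgroup Ghat) [G.Normal]
    (s : Ghat ⧸ G →* Ghat)
    (hs : ∀ h : Ghat ⧸ G, (QuotientGroup.mk (s h) : Ghat ⧸ G) = h)
    (φ : Ghat → ℝ) (D : ℝ)
    (hq : ∀ g h : Ghat, g ∈ G → h ∈ G → |φ (g * h) - φ g - φ h| ≤ D)
    (hhom : ∀ g ∈ G, ∀ n : ℤ, φ (g ^ n) = n * φ g)
    (hinv : ∀ (a : Ghat), ∀ g ∈ G, φ (a * g * a⁻¹) = φ g) :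
    (∀ a b : Ghat,
        |φ ((s (QuotientGroup.mk (a * b)))⁻¹ * (a * b)) -
          φ ((s (QuotientGroup.mk a))⁻¹ * a) -
          φ ((s (QuotientGroup.mk b))⁻¹ * b)| ≤ D) ∧
    (∀ g ∈ G, φ ((s (QuotientGroup.mk g))⁻¹ * g) = φ g) := by
  have hmem : ∀ a : Ghat, (s (QuotientGroup.mk a))⁻¹ * a ∈ G := by
    intro a
    rw [← QuotientGroup.eq_one_iff]
    simp [hs a]
  constructor
  · intro a b
    set sa := s (QuotientGroup.mk a) with hsa
    set sb := s (QuotientGroup.mk b) with hsb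
    have hab : s (QuotientGroup.mk (a * b)) = sa * sb := by
      rw [hsa, hsb, ← map_mul]; rfl
    set x := sa⁻¹ * a with hx
    set y := sb⁻¹ * b with hy
    have hxG : x ∈ G := hmem a
    have hyG : y ∈ G := hmem b
    have hx' : sb⁻¹ * x * sb ∈ G := by
      have := Subgroup.Normal.conj_mem ‹G.Normal› x hxG sb⁻¹
      simpa using this
    have key : (s (QuotientGroup.mk (a * b)))⁻¹ * (a * b) = (sb⁻¹ * x * sb) * y := by
      rw [hab, hx, hy]; group
    have hφ : φ (sb⁻¹ * x * sb) = φ x := by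
      have := hinv sb⁻¹ x hxG
      simpa using this
    rw [key]
    calc |φ ((sb⁻¹ * x * sb) * y) - φ x - φ y|
        = |φ ((sb⁻¹ * x * sb) * y) - φ (sb⁻¹ * x * sb) - φ y| := by rw [hφ]
      _ ≤ D := hq _ _ hx' hyG
  · intro g hg
    have : (QuotientGroup.mk g : Ghat ⧸ G) = 1 := (QuotientGroup.eq_one_iff g).mpr hg
    rw [this, map_one]
    simp
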